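/- If an isometry Y : Hⁿ → H (a row operator built from operators in a closed subalgebra A of B(H)) is a proper isometry (i.e., not surjective), then no sufficiently small perturbation of its entries by elements of B(H) yields a tuple (A₁',...,Aₙ') with Σᵢ Aᵢ'Bᵢ = I for some Bᵢ ∈ B(H). Consequently, if the row space of A contains a proper isometry Hⁿ → H, then the right topological stable rank of A is at least n+1. -/

import Mathlib

/-- `n`-tuples generating `A` as a left ideal. -/
noncomputable def Lg (A : Type*) [NormedRing A] (n : ℕ) : Set (Fin n → A) :=
  {a | ∃ b : Fin n → A, ∑ i, b i * a i = 1}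

/-- `n`-tuples generating `A` as a right ideal. -/
noncomputable def Rg (A : Type*) [NormedRing A] (n : ℕ) : Set (Fin n → A) :=
  {a | ∃ b : Fin n → A, ∑ i, a i * b i = 1}

/-- The left topological stable rank. -/
noncomputable def ltsr (A : Type*) [NormedRing A] : ℕ∞ :=
  sInf {N : ℕ∞ | ∃ n : ℕ, N = n ∧ Dense (Lg A n)}

/-- The right topological stable rank. -/
noncomputable def rtsr (A : Type*) [NormedRing A] : ℕ∞ :=
  sInf {N : ℕ∞ | ∃ n : ℕ, N = n ∧ Dense (Rg A n)}


set_option maxHeartbeats 1000000 in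
set_option synthInstance.maxHeartbeats 400000 in
/-- If the row space of a closed unital subalgebra `𝒜 ⊆ B(H)` contains a proper isometry
`Hⁿ → H`, then no small perturbation of its entries is right invertible, and
`rtsr 𝒜 ≥ n + 1`. -/
theorem stmt5 {H : Type*} [NormedAddCommGroup H] [InnerProductSpace ℂ H] [CompleteSpace H]
    (𝒜 : Subalgebra ℂ (H →L[ℂ] H)) (hclosed : IsClosed (𝒜 : Set (H →L[ℂ] H)))
    (n : ℕ) (A : Fin n → H →L[ℂ] H) (hmem : ∀ i, A i ∈ 𝒜)
    (hiso : ∀ x : Fin n → H, ‖∑ i, A i (x i)‖ ^ 2 = ∑ i, ‖x i‖ ^ 2)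
    (hproper : ¬ Function.Surjective fun x : Fin n → H => ∑ i, A i (x i)) :
    (∃ ε > (0 : ℝ), ∀ A' : Fin n → H →L[ℂ] H, (∀ i, ‖A i - A' i‖ < ε) →
        ¬ ∃ B : Fin n → H →L[ℂ] H, ∑ i, A' i * B i = 1) ∧
      (n + 1 : ℕ∞) ≤ rtsr 𝒜 := by
  classical
  set ε : ℝ := 1 / (2 * (n + 1)) with hε_def
  have hεpos : (0 : ℝ) < ε := by positivity
  -- each coordinate is dominated by the row operator value
  have hcoord : ∀ (x : Fin n → H) (i : Fin n), ‖x i‖ ≤ ‖∑ j, A j (x j)‖ := by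
    intro x i
    have h1 : ‖x i‖ ^ 2 ≤ ‖∑ j, A j (x j)‖ ^ 2 := by
      rw [hiso]
      exact Finset.single_le_sum (f := fun j => ‖x j‖ ^ 2)
        (fun j _ => sq_nonneg _) (Finset.mem_univ i)
    nlinarith [norm_nonneg (x i), norm_nonneg (∑ j, A j (x j))]
  -- the row operator
  set F : (Fin n → H) →L[ℂ] H := ∑ i, (A i).comp (ContinuousLinearMap.proj i) with hF_def
  have hF : ∀ x : Fin n → H, F x = ∑ i, A i (x i) := by
    intro x
    simp [hF_def, ContinuousLinearMap.sum_apply]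
  -- its range is a closed proper submodule
  set S : Submodule ℂ H := LinearMap.range (F : (Fin n → H) →ₗ[ℂ] H) with hS_def
  have hSclosed : IsClosed (S : Set H) := by
    have hanti : AntilipschitzWith 1 F := by
      rw [antilipschitzWith_iff_le_mul_dist]
      intro x y
      rw [dist_eq_norm, dist_eq_norm, ← map_sub, NNReal.coe_one, one_mul]
      refine (pi_norm_le_iff_of_nonneg (norm_nonneg _)).2 fun i => ?_
      rw [hF]
      exact hcoord (x - y) i
    have h := hanti.isClosed_range F.uniformContinuous
    have : (S : Set H) = Set.range F := by
      ext y; simp [hS_def, LinearMap.mem_range, Set.mem_range]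
    rw [this]
    exact h
  have hS_ne_top : S ≠ ⊤ := by
    intro htop
    apply hproper
    intro y
    obtain ⟨x, hx⟩ := (LinearMap.range_eq_top.mp htop) y
    exact ⟨x, by dsimp only; rw [← hF]; exact hx⟩
  haveI : CompleteSpace S := hSclosed.completeSpace_coe
  have hbot : Sᗮ ≠ ⊥ := fun h => hS_ne_top (Submodule.orthogonal_eq_bot_iff.mp h)
  obtain ⟨ξ₀, hξ₀S, hξ₀⟩ := (Submodule.ne_bot_iff _).mp hbot
  set ξ : H := (‖ξ₀‖ : ℂ)⁻¹ • ξ₀ with hξ_def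
  have hξnorm : ‖ξ‖ = 1 := norm_smul_inv_norm hξ₀
  have hξS : ξ ∈ Sᗮ := Submodule.smul_mem _ _ hξ₀S
  have hnε : (n : ℝ) * ε ≤ 1 / 2 := by
    rw [hε_def, mul_one_div, div_le_div_iff₀ (by positivity) (by norm_num)]
    push_cast
    linarith
  -- the key perturbation claim
  have key : ∀ A' : Fin n → H →L[ℂ] H, (∀ i, ‖A i - A' i‖ < ε) →
      ¬ ∃ B : Fin n → H →L[ℂ] H, ∑ i, A' i * B i = 1 := by
    rintro A' hA' ⟨B, hB⟩
    set x : Fin n → H := fun i => B i ξ with hx_def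
    have hx : ∑ i, A' i (x i) = ξ := by
      have h := congrArg (fun T : H →L[ℂ] H => T ξ) hB
      simpa [ContinuousLinearMap.sum_apply, ContinuousLinearMap.mul_apply] using h
    set u : H := ∑ i, A i (x i) with hu
    have huS : u ∈ S := ⟨x, by rw [ContinuousLinearMap.coe_coe, hF]⟩
    have horth : (inner ℂ u ξ : ℂ) = 0 := (Submodule.mem_orthogonal S ξ).mp hξS u huS
    have h1 : ‖u - ξ‖ ^ 2 = ‖u‖ ^ 2 + 1 := by
      rw [norm_sub_sq (𝕜 := ℂ), horth, hξnorm]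
      simp
    have h2 : ‖u - ξ‖ ≤ (n : ℝ) * ε * ‖u‖ := by
      have hsum : u - ξ = ∑ i, ((A i - A' i) : H →L[ℂ] H) (x i) := by
        rw [hu, ← hx]
        simp [ContinuousLinearMap.sub_apply, Finset.sum_sub_distrib]
      rw [hsum]
      calc ‖∑ i, ((A i - A' i) : H →L[ℂ] H) (x i)‖
          ≤ ∑ i, ‖((A i - A' i) : H →L[ℂ] H) (x i)‖ := norm_sum_le _ _
        _ ≤ ∑ _i : Fin n, ε * ‖u‖ := by
            refine Finset.sum_le_sum fun i _ => ?_
            refine le_trans ((A i - A' i).le_opNorm (x i)) ?_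
            exact mul_le_mul (hA' i).le (hcoord x i) (norm_nonneg _) hεpos.le
        _ = (n : ℝ) * ε * ‖u‖ := by
            rw [Finset.sum_const, Finset.card_univ, Fintype.card_fin, nsmul_eq_mul]
            ring
    have h3 : ‖u - ξ‖ ^ 2 ≤ ((n : ℝ) * ε * ‖u‖) ^ 2 :=
      pow_le_pow_left₀ (norm_nonneg _) h2 2
    have h4 : ((n : ℝ) * ε) ^ 2 ≤ (1 / 2) ^ 2 :=
      pow_le_pow_left₀ (by positivity) hnε 2
    have h5 : ((n : ℝ) * ε) ^ 2 * ‖u‖ ^ 2 ≤ (1 / 2) ^ 2 * ‖u‖ ^ 2 :=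
      mul_le_mul_of_nonneg_right h4 (sq_nonneg _)
    rw [mul_pow] at h3
    nlinarith [sq_nonneg ‖u‖]
  refine ⟨⟨ε, hεpos, key⟩, ?_⟩
  refine le_sInf ?_
  rintro N ⟨m, rfl, hdense⟩
  by_contra hlt
  push_neg at hlt
  have hmn : m < n + 1 := by exact_mod_cast hlt
  have hm : m ≤ n := Nat.lt_succ_iff.mp hmn
  -- the restricted tuple, as a point of (Fin m → 𝒜)
  set p : Fin m → 𝒜 := fun j => ⟨A (Fin.castLE hm j), hmem _⟩ with hp_def
  obtain ⟨q, hqball, hqRg⟩ := Metric.dense_iff.mp hdense p ε hεpos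
  obtain ⟨b, hb⟩ := hqRg
  set A' : Fin n → H →L[ℂ] H :=
    fun i => if h : (i : ℕ) < m then (q ⟨i, h⟩ : H →L[ℂ] H) else A i with hA'_def
  set B : Fin n → H →L[ℂ] H :=
    fun i => if h : (i : ℕ) < m then (b ⟨i, h⟩ : H →L[ℂ] H) else 0 with hB_def
  refine key A' ?_ ⟨B, ?_⟩
  · intro i
    by_cases h : (i : ℕ) < m
    · have hqp : dist q p < ε := by simpa [Metric.mem_ball] using hqball
      have h2 := dist_le_pi_dist q p ⟨(i : ℕ), h⟩
      have h3 : dist (q ⟨(i : ℕ), h⟩) (p ⟨(i : ℕ), h⟩) < ε := lt_of_le_of_lt h2 hqp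
      rw [Subtype.dist_eq] at h3
      have h4 : Fin.castLE hm (⟨(i : ℕ), h⟩ : Fin m) = i := Fin.ext rfl
      have h5 : ((p ⟨(i : ℕ), h⟩ : 𝒜) : H →L[ℂ] H) = A i := by
        rw [hp_def]; simp [h4]
      rw [h5, dist_comm, dist_eq_norm] at h3
      simpa [hA'_def, h] using h3
    · simp [hA'_def, h, hεpos]
  · have hterm : ∀ i : Fin n, A' i * B i =
        (fun k : ℕ => if h : k < m
          then ((q ⟨k, h⟩ : H →L[ℂ] H) * (b ⟨k, h⟩ : H →L[ℂ] H)) else 0) (i : ℕ) := by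
      intro i
      by_cases h : (i : ℕ) < m <;> simp [hA'_def, hB_def, h]
    rw [Finset.sum_congr rfl (fun i _ => hterm i),
      Fin.sum_univ_eq_sum_range
        (fun k : ℕ => if h : k < m
          then ((q ⟨k, h⟩ : H →L[ℂ] H) * (b ⟨k, h⟩ : H →L[ℂ] H)) else 0) n,
      ← Finset.sum_subset (Finset.range_subset_range.mpr hm)
        (fun k _ hk => by rw [dif_neg (by simpa using hk)]),
      ← Fin.sum_univ_eq_sum_range
        (fun k : ℕ => if h : k < m
          then ((q ⟨k, h⟩ : H →L[ℂ] H) * (b ⟨k, h⟩ : H →L[ℂ] H)) else 0) m]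
    have hterm2 : ∀ j : Fin m,
        (if h : (j : ℕ) < m
          then ((q ⟨(j : ℕ), h⟩ : H →L[ℂ] H) * (b ⟨(j : ℕ), h⟩ : H →L[ℂ] H)) else 0)
          = ((q j : H →L[ℂ] H) * (b j : H →L[ℂ] H)) := by
      intro j
      rw [dif_pos j.2]
    rw [Finset.sum_congr rfl (fun j _ => hterm2 j)]
    have hcoe : ∑ j : Fin m, ((q j : H →L[ℂ] H) * (b j : H →L[ℂ] H))
        = ((∑ j : Fin m, q j * b j : 𝒜) : H →L[ℂ] H) := by
      norm_cast
    rw [hcoe, hb, OneMemClass.coe_one]
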